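/- Let Q be a positive definite quadratic form on ℝ^{d-1} with matrix A, and let c ≥ 0. Let g : (0, ε₀) → [0, ∞) satisfy g(ε)/ε → c, and define the caps C_ε = {(x', x_d) : -g(ε) + Q(x') ≤ x_d ≤ 0} ⊂ ℝ^d. Then vol_d(C_ε)/ε^{(d+1)/2} → (2/(d+1)) · κ_{d-1} · c^{(d+1)/2} / √(det A) as ε → 0⁺. -/

import Mathlib

open MeasureTheory Filter Topology Set Metric
open scoped MatrixOrder

lemma aux_Q_inner {n : ℕ} (A : Matrix (Fin n) (Fin n) ℝ)
    (x : EuclideanSpace ℝ (Fin n)) :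
    ∑ i, ∑ j, A i j * x i * x j = inner ℝ x (Matrix.toEuclideanLin A x) := by
  simp only [PiLp.inner_apply, RCLike.inner_apply, conj_trivial,
    Matrix.toEuclideanLin_apply, PiLp.toLp_apply,
    Matrix.mulVec, dotProduct, Finset.mul_sum, Finset.sum_mul]
  exact Finset.sum_congr rfl fun i _ => Finset.sum_congr rfl fun j _ => by ring

lemma aux_cap_volume {n : ℕ} (hn : 0 < n) (A : Matrix (Fin n) (Fin n) ℝ) (hApd : A.PosDef)
    (Q : EuclideanSpace ℝ (Fin n) → ℝ)
    (hQ : ∀ x, Q x = ∑ i, ∑ j, A i j * x i * x j)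
    (hpd : ∀ x : EuclideanSpace ℝ (Fin n), x ≠ 0 → 0 < Q x)
    {s : ℝ} (hs : 0 ≤ s) :
    volume {p : EuclideanSpace ℝ (Fin n) × ℝ | -s + Q p.1 ≤ p.2 ∧ p.2 ≤ 0} =
      ENNReal.ofReal ((Real.sqrt A.det)⁻¹ * (s ^ (((n : ℝ) + 2)/2) / (((n : ℝ) + 2)/2))) *
        volume (Metric.closedBall (0 : EuclideanSpace ℝ (Fin n)) 1) := by
  set K := volume (Metric.closedBall (0 : EuclideanSpace ℝ (Fin n)) 1) with hK
  set B := CFC.sqrt A with hBdef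
  have hBsd : B.PosSemidef := Matrix.nonneg_iff_posSemidef.mp (CFC.sqrt_nonneg A)
  have hBH : B.conjTranspose = B := hBsd.1
  have hBB : B * B = A := CFC.sqrt_mul_sqrt_self A hApd.posSemidef.nonneg
  set T : EuclideanSpace ℝ (Fin n) →ₗ[ℝ] EuclideanSpace ℝ (Fin n) := Matrix.toEuclideanLin B with hTdef
  -- Q as a squared norm
  have key : ∀ x : EuclideanSpace ℝ (Fin n), Q x = ‖T x‖ ^ 2 := by
    intro x
    have hadj : LinearMap.adjoint T = T := by
      rw [hTdef, ← Matrix.toEuclideanLin_conjTranspose_eq_adjoint, hBH]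
    have hTT : Matrix.toEuclideanLin A x = T (T x) := by
      rw [← hBB]
      simp [hTdef, Matrix.toEuclideanLin_apply, Matrix.mulVec_mulVec]
    calc Q x = inner ℝ x (Matrix.toEuclideanLin A x) := by rw [hQ]; exact aux_Q_inner A x
      _ = inner ℝ x (LinearMap.adjoint T (T x)) := by rw [hadj, hTT]
      _ = inner ℝ (T x) (T x) := LinearMap.adjoint_inner_right T _ _
      _ = ‖T x‖ ^ 2 := real_inner_self_eq_norm_sq _
  -- determinant facts
  have hdetT : LinearMap.det T = B.det := by
    rw [hTdef, Matrix.toEuclideanLin_eq_toLin, LinearMap.det_toLin]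
  have habs : |B.det| = Real.sqrt A.det := by
    rw [← hBB, Matrix.det_mul, ← sq, Real.sqrt_sq_eq_abs]
  have hsq : 0 < Real.sqrt A.det := Real.sqrt_pos.2 hApd.det_pos
  have hdetB_ne : B.det ≠ 0 := by
    intro h; rw [h, abs_zero] at habs; linarith
  -- volume of sublevel sets
  have hvol0 : volume (Metric.closedBall (0 : EuclideanSpace ℝ (Fin n)) 0) = 0 := by
    rw [Measure.addHaar_closedBall' volume (0 : EuclideanSpace ℝ (Fin n)) le_rfl, finrank_euclideanSpace_fin,
      zero_pow hn.ne', ENNReal.ofReal_zero, zero_mul]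
  have hell : ∀ u : ℝ, volume {x : EuclideanSpace ℝ (Fin n) | Q x ≤ u} =
      ENNReal.ofReal ((Real.sqrt A.det)⁻¹ * Real.sqrt u ^ n) * K := by
    intro u
    by_cases hu : 0 < u
    · have hset : {x : EuclideanSpace ℝ (Fin n) | Q x ≤ u} = T ⁻¹' Metric.closedBall 0 (Real.sqrt u) := by
        ext x
        rw [mem_setOf_eq, mem_preimage, mem_closedBall_zero_iff, key x,
          Real.le_sqrt (norm_nonneg _) hu.le]
      rw [hset, Measure.addHaar_preimage_linearMap volume (hdetT ▸ hdetB_ne),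
        Measure.addHaar_closedBall' volume (0 : EuclideanSpace ℝ (Fin n)) (Real.sqrt_nonneg u),
        finrank_euclideanSpace_fin, hdetT, abs_inv, habs,
        ENNReal.ofReal_mul (inv_nonneg.2 hsq.le), ← mul_assoc]
    · push_neg at hu
      have hsub : {x : EuclideanSpace ℝ (Fin n) | Q x ≤ u} ⊆ Metric.closedBall (0 : EuclideanSpace ℝ (Fin n)) 0 := by
        intro x hx
        rcases eq_or_ne x 0 with h | h
        · simp [h]
        · exact absurd (lt_of_lt_of_le (hpd x h) (le_trans hx hu)) (lt_irrefl 0)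
      rw [Real.sqrt_eq_zero'.2 hu, zero_pow hn.ne', mul_zero, ENNReal.ofReal_zero, zero_mul]
      exact le_antisymm (le_trans (measure_mono hsub) hvol0.le) (zero_le)
  -- continuity and measurability
  have hQc : Continuous Q := by
    have : Continuous fun x : EuclideanSpace ℝ (Fin n) => ‖T x‖ ^ 2 :=
      ((T.continuous_of_finiteDimensional).norm).pow 2
    exact (funext key : Q = fun x => ‖T x‖ ^ 2) ▸ this
  set Cs := {p : EuclideanSpace ℝ (Fin n) × ℝ | -s + Q p.1 ≤ p.2 ∧ p.2 ≤ 0} with hCs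
  have hmeas : MeasurableSet Cs :=
    ((isClosed_le ((continuous_const.add (hQc.comp continuous_fst))) continuous_snd).inter
      (isClosed_le continuous_snd continuous_const)).measurableSet
  set F : ℝ → ENNReal := fun u => ENNReal.ofReal ((Real.sqrt A.det)⁻¹ * Real.sqrt u ^ n) * K
    with hF
  have hslice : ∀ t : ℝ, volume ((fun x => (x, t)) ⁻¹' Cs) = Set.indicator (Iic s) F (t + s) := by
    intro t
    by_cases ht : t ≤ 0
    · have hpre : ((fun x : EuclideanSpace ℝ (Fin n) => (x, t)) ⁻¹' Cs) = {x : EuclideanSpace ℝ (Fin n) | Q x ≤ t + s} := by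
        ext x
        simp only [mem_preimage, hCs, mem_setOf_eq, ht, and_true]
        constructor <;> intro h <;> linarith
      rw [hpre, hell (t + s), Set.indicator_of_mem (by simp only [mem_Iic]; linarith)]
    · have hpre : ((fun x : EuclideanSpace ℝ (Fin n) => (x, t)) ⁻¹' Cs) = ∅ := by
        ext x
        simp only [mem_preimage, hCs, mem_setOf_eq, mem_empty_iff_false, iff_false, not_and]
        intro _; linarith
      rw [hpre, measure_empty, Set.indicator_of_notMem (by simp only [mem_Iic]; push_neg; linarith)]
  have hKne : K ≠ ⊤ := (measure_closedBall_lt_top).ne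
  -- main computation
  have h1 : volume Cs = ∫⁻ t : ℝ, Set.indicator (Iic s) F (t + s) := by
    rw [MeasureTheory.Measure.volume_eq_prod, Measure.prod_apply_symm hmeas]
    exact lintegral_congr hslice
  rw [h1, lintegral_add_right_eq_self (Set.indicator (Iic s) F) s,
    lintegral_indicator measurableSet_Iic]
  rw [← Set.Iic_union_Ioc_eq_Iic hs, lintegral_union measurableSet_Ioc (Set.Iic_disjoint_Ioc le_rfl)]
  have hzero : ∫⁻ t in Iic (0:ℝ), F t = 0 := by
    have hz : ∀ t ∈ Iic (0:ℝ), F t = (fun _ : ℝ => (0 : ENNReal)) t := fun t ht => by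
      simp only [hF, Real.sqrt_eq_zero'.2 ht, zero_pow hn.ne', mul_zero,
        ENNReal.ofReal_zero, zero_mul]
    rw [setLIntegral_congr_fun measurableSet_Iic hz, lintegral_zero]
  rw [hzero, zero_add]
  have hmain : ∫⁻ t in Ioc 0 s, F t =
      ENNReal.ofReal ((Real.sqrt A.det)⁻¹) * K *
        ENNReal.ofReal (s ^ (((n : ℝ) + 2)/2) / (((n : ℝ) + 2)/2)) := by
    have hcong : ∀ t ∈ Ioc (0:ℝ) s, F t =
        (ENNReal.ofReal ((Real.sqrt A.det)⁻¹) * K) * ENNReal.ofReal (t ^ ((n : ℝ)/2)) := by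
      intro t ht
      have h1 : Real.sqrt t ^ n = t ^ ((n : ℝ)/2) := by
        rw [Real.sqrt_eq_rpow, ← Real.rpow_natCast (t ^ (1/(2:ℝ))) n, ← Real.rpow_mul ht.1.le]
        congr 1
        push_cast
        ring
      rw [hF]
      simp only
      rw [h1, ENNReal.ofReal_mul (inv_nonneg.2 hsq.le)]
      ring
    rw [setLIntegral_congr_fun measurableSet_Ioc hcong,
      lintegral_const_mul' _ _ (ENNReal.mul_ne_top ENNReal.ofReal_ne_top hKne)]
    congr 1
    have hint : IntegrableOn (fun t : ℝ => t ^ ((n : ℝ)/2)) (Ioc 0 s) :=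
      (intervalIntegral.intervalIntegrable_rpow' (by have : (0:ℝ) ≤ (n:ℝ) := Nat.cast_nonneg n; linarith)).1
    have hnn : 0 ≤ᵐ[volume.restrict (Ioc (0:ℝ) s)] fun t : ℝ => t ^ ((n : ℝ)/2) :=
      (ae_restrict_iff' measurableSet_Ioc).2
        (ae_of_all _ fun t ht => Real.rpow_nonneg ht.1.le _)
    rw [← ofReal_integral_eq_lintegral_ofReal hint hnn]
    congr 1
    rw [← intervalIntegral.integral_of_le hs, integral_rpow (Or.inl (by have : (0:ℝ) ≤ (n:ℝ) := Nat.cast_nonneg n; linarith))]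
    rw [Real.zero_rpow (by have : (0:ℝ) ≤ (n:ℝ) := Nat.cast_nonneg n; intro h; linarith), sub_zero]
    have : (n : ℝ)/2 + 1 = ((n : ℝ) + 2)/2 := by ring
    rw [this]
  rw [hmain, ENNReal.ofReal_mul (inv_nonneg.2 hsq.le)]
  ring

theorem stmt_18 (d : ℕ) (hd : 2 ≤ d)
    (A : Matrix (Fin (d - 1)) (Fin (d - 1)) ℝ) (hA : A.IsSymm)
    (Q : EuclideanSpace ℝ (Fin (d - 1)) → ℝ)
    (hQ : ∀ x, Q x = ∑ i, ∑ j, A i j * x i * x j)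
    (hpd : ∀ x : EuclideanSpace ℝ (Fin (d - 1)), x ≠ 0 → 0 < Q x)
    (c : ℝ) (hc : 0 ≤ c)
    (ε₀ : ℝ) (hε₀ : 0 < ε₀) (g : ℝ → ℝ)
    (hgnn : ∀ ε ∈ Set.Ioo 0 ε₀, 0 ≤ g ε)
    (hg : Tendsto (fun ε => g ε / ε) (𝓝[>] 0) (𝓝 c))
    (C : ℝ → Set (EuclideanSpace ℝ (Fin (d - 1)) × ℝ))
    (hC : ∀ ε, C ε = {p | -g ε + Q p.1 ≤ p.2 ∧ p.2 ≤ 0}) :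
    Tendsto (fun ε => (volume (C ε)).toReal / ε ^ ((d + 1 : ℝ) / 2)) (𝓝[>] 0)
      (𝓝 ((2 / (d + 1 : ℝ)) *
        (volume (Metric.closedBall (0 : EuclideanSpace ℝ (Fin (d - 1))) 1)).toReal *
        c ^ ((d + 1 : ℝ) / 2) / Real.sqrt A.det)) := by
  have hn : 0 < d - 1 := by omega
  have hcast : ((d - 1 : ℕ) : ℝ) + 2 = (d : ℝ) + 1 := by
    have h1 : (1:ℕ) ≤ d := by omega
    push_cast [h1]
    ring
  have hApd : A.PosDef := by
    rw [Matrix.posDef_iff_dotProduct_mulVec]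
    constructor
    · rw [Matrix.IsHermitian, Matrix.conjTranspose_eq_transpose_of_trivial]; exact hA
    · intro x hx
      have hx' : ((WithLp.equiv 2 (Fin (d-1) → ℝ)).symm x) ≠ 0 := fun h => hx (congrArg WithLp.ofLp h)
      have h := hpd _ hx'
      rw [hQ] at h
      simp only [WithLp.equiv_symm_apply, PiLp.toLp_apply] at h
      have heq : dotProduct (star x) (A.mulVec x) = ∑ i, ∑ j, A i j * x i * x j := by
        simp only [dotProduct, Matrix.mulVec, Pi.star_apply, star_trivial, Finset.mul_sum]
        exact Finset.sum_congr rfl fun i _ => Finset.sum_congr rfl fun j _ => by ring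
      rw [heq]; exact h
  set p : ℝ := ((d : ℝ) + 1) / 2 with hp
  have hppos : 0 < p := by positivity
  set K := volume (Metric.closedBall (0 : EuclideanSpace ℝ (Fin (d - 1))) 1) with hK
  have hsq : 0 < Real.sqrt A.det := Real.sqrt_pos.2 hApd.det_pos
  -- the limit function
  have hlim : Tendsto (fun ε => 2 / ((d:ℝ) + 1) * K.toReal * (g ε / ε) ^ p / Real.sqrt A.det)
      (𝓝[>] 0) (𝓝 (2 / ((d:ℝ) + 1) * K.toReal * c ^ p / Real.sqrt A.det)) := by
    exact ((hg.rpow_const (Or.inr hppos.le)).const_mul _).div_const _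
  refine Tendsto.congr' ?_ hlim
  filter_upwards [Ioo_mem_nhdsGT_of_mem (by exact ⟨le_refl 0, hε₀⟩ : (0:ℝ) ∈ Set.Ico 0 ε₀)]
    with ε hε
  have hεpos : 0 < ε := hε.1
  have hgε : 0 ≤ g ε := hgnn ε hε
  have hvol : volume (C ε) = ENNReal.ofReal ((Real.sqrt A.det)⁻¹ * (g ε ^ p / p)) * K := by
    rw [hC ε]
    have := aux_cap_volume hn A hApd Q hQ hpd hgε
    rw [hcast] at this
    exact this
  rw [hvol, ENNReal.toReal_mul, ENNReal.toReal_ofReal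
    (mul_nonneg (inv_nonneg.2 hsq.le) (div_nonneg (Real.rpow_nonneg hgε _) hppos.le))]
  rw [Real.div_rpow hgε hεpos.le]
  have hεp : 0 < ε ^ p := Real.rpow_pos_of_pos hεpos _
  field_simp
  ring
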